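/- There is an absolute constant C > 0 such that for all positive integers n, k, every finite alphabet Σ with |Σ| ≥ 2, and every real 0 < γ ≤ 1, there exists a γ-PRG Gen : {0,1}^s → ({0,1}^n)^k for (k,n,Σ) block decision trees with seed length s ≤ n + k·log₂|Σ| + 2·log₂(1/γ) + C. -/

import Mathlib

open Classical

/-- Probability of `P` under the uniform distribution on a finite type. -/
noncomputable def pr {α : Type*} [Fintype α] (P : α → Prop) : ℝ :=
  ((Finset.univ.filter P).card : ℝ) / (Fintype.card α : ℝ)

/-- `f : {0,1}^n → ℝ^d` is `(ε,δ)`-concentrated at `μ`. -/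
def Concentrated (n d : ℕ) (ε δ : ℝ)
    (f : (Fin n → Bool) → Fin d → ℝ) (μ : Fin d → ℝ) : Prop :=
  pr (fun X : Fin n → Bool => ∃ j, |f X j - μ j| > ε) ≤ δ

/-- A deterministic owner for `k` rounds of `(ε,δ)`-concentrated functions
`{0,1}^n → ℝ^d`: given the history of responses `Y_1,…,Y_{i-1}`, it produces
a function `f_i` together with a point `μ_i` at which `f_i` is concentrated. -/
structure Owner (n k d : ℕ) (ε δ : ℝ) where
  act : List (Fin d → ℝ) → (((Fin n → Bool) → Fin d → ℝ) × (Fin d → ℝ))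
  conc : ∀ ys : List (Fin d → ℝ), ys.length < k →
    Concentrated n d ε δ (act ys).1 (act ys).2

/-- A one-query steward with randomness complexity `m`: in each round it chooses
a query point from its randomness and the past query answers, and it chooses a
response from its randomness and the past and current query answers. -/
structure Steward (n k d m : ℕ) where
  q : (Fin m → Bool) → List (Fin d → ℝ) → (Fin n → Bool)
  r : (Fin m → Bool) → List (Fin d → ℝ) → (Fin d → ℝ) → (Fin d → ℝ)

/-- The interaction `O ↔ S(Z)` for `i` rounds: the list of triples `(Y_i, W_i, μ_i)`. -/
noncomputable def run {n k d m : ℕ} {ε δ : ℝ} (O : Owner n k d ε δ) (S : Steward n k d m)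
    (Z : Fin m → Bool) : ℕ → List ((Fin d → ℝ) × (Fin d → ℝ) × (Fin d → ℝ))
  | 0 => []
  | i + 1 =>
    let h := run O S Z i
    let fμ := O.act (h.map fun p => p.1)
    let X := S.q Z (h.map fun p => p.2.1)
    let W := fμ.1 X
    h ++ [(S.r Z (h.map fun p => p.2.1) W, W, fμ.2)]

/-- `S` is a one-query `(ε',δ')`-steward for `k` adaptively chosen
`(ε,δ)`-concentrated functions `{0,1}^n → ℝ^d`. -/
def IsSteward (n k d m : ℕ) (ε δ ε' δ' : ℝ) (S : Steward n k d m) : Prop :=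
  ∀ O : Owner n k d ε δ,
    pr (fun Z : Fin m → Bool =>
      ∃ p ∈ run O S Z k, ∃ j : Fin d, |p.1 j - p.2.2 j| > ε') ≤ δ'

/-- The output string of a `(k,n,Σ)` block decision tree, given as the family of
node functions `v_w` indexed by strings `w`, on input the list `Xs` of blocks:
`σ_i = v_{(σ_1,…,σ_{i-1})}(X_i)`. -/
def treeOutList {A I : Type*} (v : List A → I → A) (Xs : List I) : List A :=
  Xs.foldl (fun w X => w ++ [v w X]) []

/-- `Gen` is a `γ`-PRG for `(k,n,A)` block decision trees: for every tree, the total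
variation distance between the output distribution on pseudorandom inputs and on
truly random inputs is at most `γ`. -/
def IsBDTPRG (n k s : ℕ) (A : Type*) [Fintype A] (γ : ℝ)
    (Gen : (Fin s → Bool) → Fin k → (Fin n → Bool)) : Prop :=
  ∀ v : List A → (Fin n → Bool) → A,
    (1 / 2) * ∑ σ : Fin k → A,
      |pr (fun x : Fin s → Bool => treeOutList v (List.ofFn (Gen x)) = List.ofFn σ)
        - pr (fun X : Fin k → (Fin n → Bool) => treeOutList v (List.ofFn X) = List.ofFn σ)|
      ≤ γ

lemma myexp_le (x : ℝ) (h0 : 0 ≤ x) (h1 : x ≤ 1) : Real.exp x ≤ 1 + x + x ^ 2 := by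
  have h := Real.exp_bound' h0 h1 (n := 3) (by norm_num)
  have hx3 : x ^ 3 ≤ x ^ 2 := pow_le_pow_of_le_one h0 h1 (by norm_num)
  simp [Finset.sum_range_succ, Nat.factorial] at h
  nlinarith [sq_nonneg x]

lemma chernoff_upper {D U : Type*} [Fintype D] [Fintype U] [Nonempty U]
    (E : Finset U) {γ : ℝ} (hγ0 : 0 < γ) (hγ1 : γ ≤ 1) :
    ((Finset.univ.filter (fun g : D → U =>
        ((E.card : ℝ) / (Fintype.card U : ℝ) + γ) * (Fintype.card D : ℝ) ≤
          ((Finset.univ.filter (fun x => g x ∈ E)).card : ℝ))).card : ℝ) ≤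
      Real.exp (-(γ ^ 2) * (Fintype.card D : ℝ) / 4) *
        (Fintype.card U : ℝ) ^ (Fintype.card D) := by
  classical
  set N : ℕ := Fintype.card D with hN
  set u : ℝ := (Fintype.card U : ℝ) with hud
  have hu : 0 < u := by
    rw [hud]; exact_mod_cast Fintype.card_pos
  set p : ℝ := (E.card : ℝ) / u with hpd
  set l : ℝ := γ / 2 with hld
  have hl0 : 0 ≤ l := by rw [hld]; linarith
  have hl1 : l ≤ 1 := by rw [hld]; linarith
  have hEu : (E.card : ℝ) ≤ u := by
    rw [hud]; exact_mod_cast Finset.card_le_card (Finset.subset_univ E)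
  have hE0 : (0:ℝ) ≤ E.card := by positivity
  have hp0 : 0 ≤ p := by rw [hpd]; positivity
  have hp1 : p ≤ 1 := by rw [hpd]; exact div_le_one_of_le₀ hEu hu.le
  have hEp : (E.card : ℝ) = p * u := by rw [hpd]; field_simp
  -- pointwise identity
  have hcnt : ∀ g : D → U,
      Real.exp (l * ((Finset.univ.filter (fun x => g x ∈ E)).card : ℝ)) =
        ∏ x : D, Real.exp (l * (if g x ∈ E then (1:ℝ) else 0)) := by
    intro g
    rw [← Real.exp_sum, ← Finset.mul_sum]
    congr 2
    rw [Finset.card_filter]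
    push_cast
    rfl
  -- swap sum and product
  have hswap : ∑ g : D → U, ∏ x : D, Real.exp (l * (if g x ∈ E then (1:ℝ) else 0)) =
      ∏ x : D, ∑ y : U, Real.exp (l * (if y ∈ E then (1:ℝ) else 0)) := by
    rw [Finset.prod_univ_sum]
    rw [Fintype.piFinset_univ]
  -- inner sum
  have hinner : ∑ y : U, Real.exp (l * (if y ∈ E then (1:ℝ) else 0)) =
      (u - E.card) + E.card * Real.exp l := by
    have h1 : ∀ y : U, Real.exp (l * (if y ∈ E then (1:ℝ) else 0)) =
        if y ∈ E then Real.exp l else 1 := by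
      intro y; by_cases h : y ∈ E <;> simp [h]
    rw [Finset.sum_congr rfl (fun y _ => h1 y), Finset.sum_ite, Finset.sum_const,
      Finset.sum_const, Finset.filter_univ_mem]
    have h2 : (Finset.univ.filter (fun y => ¬ y ∈ E)) = Eᶜ := by
      ext y; simp
    rw [h2, Finset.card_compl]
    have h3 : E.card ≤ Fintype.card U := Finset.card_le_card (Finset.subset_univ E)
    rw [nsmul_eq_mul, nsmul_eq_mul, mul_one]
    rw [hud]
    push_cast [h3]
    ring
  have hsum_all : ∑ g : D → U,
      Real.exp (l * ((Finset.univ.filter (fun x => g x ∈ E)).card : ℝ)) =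
      ((u - E.card) + E.card * Real.exp l) ^ N := by
    rw [Finset.sum_congr rfl (fun g _ => hcnt g), hswap, hinner, Finset.prod_const,
      Finset.card_univ]
  have he := myexp_le l hl0 hl1
  have h1x := Real.add_one_le_exp (p * l + l ^ 2)
  have e1 : 1 - p + p * Real.exp l ≤ Real.exp (p * l + l ^ 2) := by
    nlinarith [mul_le_mul_of_nonneg_left he hp0, mul_le_mul_of_nonneg_right hp1 (sq_nonneg l)]
  have hbase : (u - E.card) + E.card * Real.exp l ≤ u * Real.exp (p * l + l ^ 2) := by
    have : (u - E.card) + E.card * Real.exp l = u * (1 - p + p * Real.exp l) := by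
      rw [hEp]; ring
    rw [this]
    exact mul_le_mul_of_nonneg_left e1 hu.le
  have hbase0 : (0:ℝ) ≤ (u - E.card) + E.card * Real.exp l := by
    nlinarith [Real.exp_pos l, Real.add_one_le_exp l]
  have hsum_le : ∑ g : D → U,
      Real.exp (l * ((Finset.univ.filter (fun x => g x ∈ E)).card : ℝ)) ≤
      u ^ N * Real.exp ((p * l + l ^ 2) * N) := by
    rw [hsum_all]
    calc ((u - E.card) + E.card * Real.exp l) ^ N ≤ (u * Real.exp (p * l + l ^ 2)) ^ N :=
          pow_le_pow_left₀ hbase0 hbase N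
      _ = u ^ N * Real.exp ((p * l + l ^ 2) * N) := by
          rw [mul_pow, ← Real.exp_nat_mul]; ring_nf
  -- Markov
  set bad := Finset.univ.filter (fun g : D → U =>
      (p + γ) * (N : ℝ) ≤ ((Finset.univ.filter (fun x => g x ∈ E)).card : ℝ)) with hbad
  have hM : (bad.card : ℝ) * Real.exp (l * ((p + γ) * N)) ≤
      ∑ g : D → U, Real.exp (l * ((Finset.univ.filter (fun x => g x ∈ E)).card : ℝ)) := by
    calc (bad.card : ℝ) * Real.exp (l * ((p + γ) * N)) =
        ∑ _g ∈ bad, Real.exp (l * ((p + γ) * N)) := by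
          rw [Finset.sum_const, nsmul_eq_mul]
      _ ≤ ∑ g ∈ bad, Real.exp (l * ((Finset.univ.filter (fun x => g x ∈ E)).card : ℝ)) := by
          apply Finset.sum_le_sum
          intro g hg
          rw [hbad, Finset.mem_filter] at hg
          exact Real.exp_le_exp.2 (mul_le_mul_of_nonneg_left hg.2 hl0)
      _ ≤ ∑ g : D → U, Real.exp (l * ((Finset.univ.filter (fun x => g x ∈ E)).card : ℝ)) := by
          apply Finset.sum_le_sum_of_subset_of_nonneg (Finset.filter_subset _ _)
          intro g _ _
          exact (Real.exp_pos _).le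
  have hfin : (bad.card : ℝ) ≤
      u ^ N * Real.exp ((p * l + l ^ 2) * N) / Real.exp (l * ((p + γ) * N)) := by
    rw [le_div_iff₀ (Real.exp_pos _)]
    exact le_trans hM hsum_le
  have hexp_eq : (p * l + l ^ 2) * N - l * ((p + γ) * N) = -(γ ^ 2) * N / 4 := by
    rw [hld]; ring
  calc (bad.card : ℝ) ≤ u ^ N * Real.exp ((p * l + l ^ 2) * N) / Real.exp (l * ((p + γ) * N)) := hfin
    _ = u ^ N * Real.exp ((p * l + l ^ 2) * N - l * ((p + γ) * N)) := by
        rw [Real.exp_sub]; ring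
    _ = Real.exp (-(γ ^ 2) * (N : ℝ) / 4) * u ^ N := by rw [hexp_eq]; ring

lemma chernoff_two {D U : Type*} [Fintype D] [Fintype U] [Nonempty U]
    (E : Finset U) {γ : ℝ} (hγ0 : 0 < γ) (hγ1 : γ ≤ 1) :
    ((Finset.univ.filter (fun g : D → U =>
        γ * (Fintype.card D : ℝ) <
          |((Finset.univ.filter (fun x => g x ∈ E)).card : ℝ) -
            (E.card : ℝ) / (Fintype.card U : ℝ) * (Fintype.card D : ℝ)|)).card : ℝ) ≤
      2 * Real.exp (-(γ ^ 2) * (Fintype.card D : ℝ) / 4) *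
        (Fintype.card U : ℝ) ^ (Fintype.card D) := by
  classical
  have hu : (0:ℝ) < (Fintype.card U : ℝ) := by exact_mod_cast Fintype.card_pos
  have hcompl : ∀ g : D → U,
      ((Finset.univ.filter (fun x => g x ∈ Eᶜ)).card : ℝ) =
        (Fintype.card D : ℝ) - ((Finset.univ.filter (fun x => g x ∈ E)).card : ℝ) := by
    intro g
    have h1 : (Finset.univ.filter (fun x => g x ∈ Eᶜ)) =
        (Finset.univ.filter (fun x => g x ∈ E))ᶜ := by ext x; simp
    have h2 : (Finset.univ.filter (fun x => g x ∈ E)).card ≤ Fintype.card D := by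
      rw [← Finset.card_univ]; exact Finset.card_filter_le _ _
    rw [h1, Finset.card_compl]
    push_cast [h2]
    ring
  have hEc : ((Eᶜ.card : ℝ)) = (Fintype.card U : ℝ) - E.card := by
    have h2 : E.card ≤ Fintype.card U := Finset.card_le_card (Finset.subset_univ E)
    rw [Finset.card_compl]; push_cast [h2]; ring
  have hsub : (Finset.univ.filter (fun g : D → U =>
        γ * (Fintype.card D : ℝ) <
          |((Finset.univ.filter (fun x => g x ∈ E)).card : ℝ) -
            (E.card : ℝ) / (Fintype.card U : ℝ) * (Fintype.card D : ℝ)|)) ⊆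
      (Finset.univ.filter (fun g : D → U =>
        ((E.card : ℝ) / (Fintype.card U : ℝ) + γ) * (Fintype.card D : ℝ) ≤
          ((Finset.univ.filter (fun x => g x ∈ E)).card : ℝ))) ∪
      (Finset.univ.filter (fun g : D → U =>
        ((Eᶜ.card : ℝ) / (Fintype.card U : ℝ) + γ) * (Fintype.card D : ℝ) ≤
          ((Finset.univ.filter (fun x => g x ∈ Eᶜ)).card : ℝ))) := by
    intro g hg
    rw [Finset.mem_filter] at hg
    rcases lt_abs.1 hg.2 with h | h
    · apply Finset.mem_union_left
      rw [Finset.mem_filter]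
      exact ⟨Finset.mem_univ _, by nlinarith⟩
    · apply Finset.mem_union_right
      rw [Finset.mem_filter]
      refine ⟨Finset.mem_univ _, ?_⟩
      rw [hcompl g, hEc]
      have : ((Fintype.card U : ℝ) - E.card) / (Fintype.card U : ℝ) =
          1 - (E.card : ℝ) / (Fintype.card U : ℝ) := by field_simp
      rw [this]
      nlinarith
  calc ((Finset.univ.filter (fun g : D → U =>
        γ * (Fintype.card D : ℝ) <
          |((Finset.univ.filter (fun x => g x ∈ E)).card : ℝ) -
            (E.card : ℝ) / (Fintype.card U : ℝ) * (Fintype.card D : ℝ)|)).card : ℝ)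
      ≤ (((Finset.univ.filter (fun g : D → U =>
        ((E.card : ℝ) / (Fintype.card U : ℝ) + γ) * (Fintype.card D : ℝ) ≤
          ((Finset.univ.filter (fun x => g x ∈ E)).card : ℝ))) ∪
      (Finset.univ.filter (fun g : D → U =>
        ((Eᶜ.card : ℝ) / (Fintype.card U : ℝ) + γ) * (Fintype.card D : ℝ) ≤
          ((Finset.univ.filter (fun x => g x ∈ Eᶜ)).card : ℝ)))).card : ℝ) := by
        exact_mod_cast Finset.card_le_card hsub
    _ ≤ ((Finset.univ.filter (fun g : D → U =>
        ((E.card : ℝ) / (Fintype.card U : ℝ) + γ) * (Fintype.card D : ℝ) ≤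
          ((Finset.univ.filter (fun x => g x ∈ E)).card : ℝ))).card : ℝ) +
        ((Finset.univ.filter (fun g : D → U =>
        ((Eᶜ.card : ℝ) / (Fintype.card U : ℝ) + γ) * (Fintype.card D : ℝ) ≤
          ((Finset.univ.filter (fun x => g x ∈ Eᶜ)).card : ℝ))).card : ℝ) := by
        exact_mod_cast Finset.card_union_le _ _
    _ ≤ Real.exp (-(γ ^ 2) * (Fintype.card D : ℝ) / 4) *
          (Fintype.card U : ℝ) ^ (Fintype.card D) +
        Real.exp (-(γ ^ 2) * (Fintype.card D : ℝ) / 4) *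
          (Fintype.card U : ℝ) ^ (Fintype.card D) := by
        exact add_le_add (chernoff_upper E hγ0 hγ1) (chernoff_upper Eᶜ hγ0 hγ1)
    _ = 2 * Real.exp (-(γ ^ 2) * (Fintype.card D : ℝ) / 4) *
          (Fintype.card U : ℝ) ^ (Fintype.card D) := by ring


-- my aux
abbrev BDTCode (n k : ℕ) (A : Type) : Type :=
  (Σ i : Fin k, Fin (i : ℕ) → A) → (Fin n → Bool) → A

noncomputable def bdtExt {n k : ℕ} {A : Type} [Inhabited A] (c : BDTCode n k A) :
    List A → (Fin n → Bool) → A :=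
  fun w X => if h : w.length < k then c ⟨⟨w.length, h⟩, fun j => w.get j⟩ X else default

def bdtCode (n k : ℕ) {A : Type} (v : List A → (Fin n → Bool) → A) : BDTCode n k A :=
  fun p X => v (List.ofFn p.2) X

lemma bdtExt_code {n k : ℕ} {A : Type} [Inhabited A] (v : List A → (Fin n → Bool) → A)
    (w : List A) (hw : w.length < k) (X : Fin n → Bool) :
    bdtExt (bdtCode n k v) w X = v w X := by
  unfold bdtExt bdtCode
  rw [dif_pos hw]
  simp

lemma foldl_congr_len {A I : Type*} {k : ℕ} (v v' : List A → I → A)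
    (hagree : ∀ w X, w.length < k → v w X = v' w X) :
    ∀ (Xs : List I) (w : List A), w.length + Xs.length ≤ k →
      Xs.foldl (fun w X => w ++ [v w X]) w = Xs.foldl (fun w X => w ++ [v' w X]) w := by
  intro Xs
  induction Xs with
  | nil => intro w _; rfl
  | cons X Xs ih =>
    intro w hlen
    simp only [List.foldl_cons]
    have hw : w.length < k := by simp [List.length_cons] at hlen; omega
    rw [hagree w X hw]
    apply ih
    simp only [List.length_append, List.length_singleton]
    simp [List.length_cons] at hlen
    omega

lemma treeOutList_congr {A I : Type*} {k : ℕ} (v v' : List A → I → A)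
    (hagree : ∀ w X, w.length < k → v w X = v' w X) (Xs : List I) (hXs : Xs.length ≤ k) :
    treeOutList v Xs = treeOutList v' Xs := by
  unfold treeOutList
  exact foldl_congr_len v v' hagree Xs [] (by simpa)

/-- output of the coded tree -/
noncomputable def bdtOut {n k : ℕ} {A : Type} [Inhabited A] (c : BDTCode n k A)
    (X : Fin k → (Fin n → Bool)) : List A :=
  treeOutList (bdtExt c) (List.ofFn X)

lemma treeOutList_eq_bdtOut {n k : ℕ} {A : Type} [Inhabited A]
    (v : List A → (Fin n → Bool) → A) (X : Fin k → (Fin n → Bool)) :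
    treeOutList v (List.ofFn X) = bdtOut (bdtCode n k v) X := by
  unfold bdtOut
  apply treeOutList_congr (k := k)
  · intro w Y hw; exact (bdtExt_code v w hw Y).symm
  · simp

lemma pr_mem_eq_sum {α : Type*} [Fintype α] {k : ℕ} {A : Type}
    (f : α → List A) (W : Finset (Fin k → A)) :
    pr (fun x => ∃ σ ∈ W, f x = List.ofFn σ) =
      ∑ σ ∈ W, pr (fun x => f x = List.ofFn σ) := by
  classical
  unfold pr
  rw [← Finset.sum_div]
  congr 1
  have h1 : Finset.univ.filter (fun x => ∃ σ ∈ W, f x = List.ofFn σ) =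
      W.biUnion (fun σ => Finset.univ.filter (fun x => f x = List.ofFn σ)) := by
    ext x
    simp [Finset.mem_biUnion]
  have hdisj : ∀ σ ∈ W, ∀ τ ∈ W, σ ≠ τ → Disjoint
      (Finset.univ.filter (fun x => f x = List.ofFn σ))
      (Finset.univ.filter (fun x => f x = List.ofFn τ)) := by
    intro σ _ τ _ hne
    rw [Finset.disjoint_left]
    intro x hx1 hx2
    rw [Finset.mem_filter] at hx1 hx2
    exact hne (List.ofFn_injective (hx1.2.symm.trans hx2.2))
  have h2 : (Finset.univ.filter (fun x => ∃ σ ∈ W, f x = List.ofFn σ)).card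
      = ∑ σ ∈ W, (Finset.univ.filter (fun x => f x = List.ofFn σ)).card := by
    rw [h1]
    exact Finset.card_biUnion hdisj
  norm_cast
  convert h2 using 2
  · exact Finset.filter_congr_decidable _ _ _
  · congr 1
    exact Finset.filter_congr_decidable _ _ _

lemma my_geom_le {a : ℕ} (ha : 2 ≤ a) (k : ℕ) (hk : 0 < k) :
    ∑ i ∈ Finset.range k, a ^ i ≤ 2 * a ^ (k - 1) := by
  induction k with
  | zero => omega
  | succ m ih =>
    rcases Nat.eq_zero_or_pos m with h | hm
    · subst h; simp
    · rw [Finset.sum_range_succ]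
      have h1 := ih hm
      have h2 : 2 * a ^ (m - 1) ≤ a ^ m := by
        calc 2 * a ^ (m - 1) ≤ a * a ^ (m - 1) := Nat.mul_le_mul_right _ ha
          _ = a ^ (m - 1 + 1) := by rw [pow_succ]; ring
          _ = a ^ m := by congr 1; omega
      have h3 : ∑ i ∈ Finset.range m, a ^ i ≤ a ^ m := le_trans h1 h2
      have : Nat.succ m - 1 = m := by omega
      rw [this]
      omega

lemma card_BDTCode (n k : ℕ) (A : Type) [Fintype A] :
    Fintype.card (BDTCode n k A) =
      ((Fintype.card A) ^ (2 ^ n)) ^ (∑ i ∈ Finset.range k, (Fintype.card A) ^ i) := by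
  classical
  rw [Fintype.card_fun]
  congr 1
  · rw [Fintype.card_fun]
    congr 1
    rw [Fintype.card_fun]
    simp
  · rw [Fintype.card_sigma]
    rw [← Fin.sum_univ_eq_sum_range (fun i => Fintype.card A ^ i) k]
    apply Finset.sum_congr rfl
    intro i _
    rw [Fintype.card_fun]
    simp

lemma hbig_lemma (n k : ℕ) (A : Type) [Fintype A] (hn : 0 < n) (hk : 0 < k)
    (ha : 2 ≤ Fintype.card A) {γ : ℝ} (hγ0 : 0 < γ) {N : ℕ}
    (hN : 128 * (2:ℝ) ^ n * (Fintype.card A : ℝ) ^ k / γ ^ 2 ≤ (N : ℝ)) :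
    (Fintype.card (BDTCode n k A × Finset (Fin k → A)) : ℝ) *
      (2 * Real.exp (-(γ ^ 2) * (N : ℝ) / 4)) < 1 := by
  classical
  set a := Fintype.card A with hadef
  set P : ℕ := ∑ i ∈ Finset.range k, a ^ i with hPdef
  have hcard : Fintype.card (BDTCode n k A × Finset (Fin k → A)) =
      a ^ (2 ^ n * P) * 2 ^ (a ^ k) := by
    rw [Fintype.card_prod, card_BDTCode, Fintype.card_finset, Fintype.card_fun]
    rw [← pow_mul]
    simp
    rfl
  -- nat inequality for the exponent
  have hP : P ≤ 2 * a ^ (k - 1) := my_geom_le ha k hk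
  have hPa : P * a ≤ 2 * a ^ k := by
    calc P * a ≤ 2 * a ^ (k - 1) * a := Nat.mul_le_mul_right _ hP
      _ = 2 * a ^ (k - 1 + 1) := by rw [pow_succ]; ring
      _ = 2 * a ^ k := by congr 2; omega
  have h2n : 2 ≤ 2 ^ n := by
    calc 2 = 2 ^ 1 := by norm_num
      _ ≤ 2 ^ n := Nat.pow_le_pow_right (by norm_num) hn
  have hak : 2 ≤ a ^ k := by
    calc 2 = 2 ^ 1 := by norm_num
      _ ≤ a ^ k := by
        calc 2 ^ 1 ≤ a ^ 1 := Nat.pow_le_pow_left ha 1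
          _ ≤ a ^ k := Nat.pow_le_pow_right (by omega) hk
  have hnat : 2 ^ n * P * a + a ^ k + 1 ≤ 4 * (2 ^ n * a ^ k) := by
    have h1 : 2 ^ n * P * a ≤ 2 ^ n * (2 * a ^ k) := by
      rw [mul_assoc]
      exact Nat.mul_le_mul_left _ hPa
    nlinarith
  -- real bounds
  have ha0 : (0:ℝ) ≤ (a : ℝ) := by positivity
  have hAe : (a : ℝ) ≤ Real.exp (a : ℝ) := by
    have := Real.add_one_le_exp (a : ℝ); linarith
  have h2e : (2 : ℝ) ≤ Real.exp 1 := by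
    have := Real.add_one_le_exp (1 : ℝ); linarith
  have hC1 : ((a : ℝ)) ^ (2 ^ n * P) ≤ Real.exp ((2 ^ n * P : ℕ) * (a : ℝ)) := by
    calc ((a : ℝ)) ^ (2 ^ n * P) ≤ (Real.exp (a : ℝ)) ^ (2 ^ n * P) :=
        pow_le_pow_left₀ ha0 hAe _
      _ = Real.exp ((2 ^ n * P : ℕ) * (a : ℝ)) := by rw [← Real.exp_nat_mul]
  have hC2 : ((2 : ℝ)) ^ (a ^ k) ≤ Real.exp ((a ^ k : ℕ) : ℝ) := by
    calc ((2 : ℝ)) ^ (a ^ k) ≤ (Real.exp 1) ^ (a ^ k) :=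
        pow_le_pow_left₀ (by norm_num) h2e _
      _ = Real.exp ((a ^ k : ℕ) * 1) := by rw [← Real.exp_nat_mul]
      _ = Real.exp ((a ^ k : ℕ) : ℝ) := by ring_nf
  have hprod : (Fintype.card (BDTCode n k A × Finset (Fin k → A)) : ℝ) * 2 ≤
      Real.exp ((2 ^ n * P : ℕ) * (a : ℝ) + ((a ^ k : ℕ) : ℝ) + 1) := by
    rw [hcard]
    push_cast
    rw [Real.exp_add, Real.exp_add]
    have e1 : (0:ℝ) ≤ ((a:ℝ)) ^ (2 ^ n * P) := by positivity
    have e2 : (0:ℝ) ≤ ((2:ℝ)) ^ (a ^ k) := by positivity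
    calc (a:ℝ) ^ (2 ^ n * P) * 2 ^ a ^ k * 2 ≤
        Real.exp ((2 ^ n * P : ℕ) * (a : ℝ)) * Real.exp ((a ^ k : ℕ) : ℝ) * Real.exp 1 := by
          apply mul_le_mul
          · apply mul_le_mul hC1 hC2 e2 (Real.exp_pos _).le
          · exact h2e
          · norm_num
          · positivity
      _ = Real.exp (↑(2 ^ n) * ↑P * ↑a) * Real.exp (↑a ^ k) * Real.exp 1 := by push_cast; ring_nf
  have hX : (0:ℝ) < (2:ℝ) ^ n * (a : ℝ) ^ k := by positivity
  have hBlt : ((2 ^ n * P : ℕ) : ℝ) * (a : ℝ) + ((a ^ k : ℕ) : ℝ) + 1 < γ ^ 2 * (N : ℝ) / 4 := by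
    have hcast : ((2 ^ n * P : ℕ) : ℝ) * (a : ℝ) + ((a ^ k : ℕ) : ℝ) + 1 ≤
        4 * ((2:ℝ) ^ n * (a : ℝ) ^ k) := by
      have := hnat
      push_cast
      exact_mod_cast (by exact_mod_cast this : ((2 ^ n * P * a + a ^ k + 1 : ℕ) : ℝ) ≤
        ((4 * (2 ^ n * a ^ k) : ℕ) : ℝ))
    have hγN : 128 * ((2:ℝ) ^ n * (a : ℝ) ^ k) ≤ γ ^ 2 * (N : ℝ) := by
      have hg2 : (0:ℝ) < γ ^ 2 := by positivity
      rw [div_le_iff₀ hg2] at hN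
      nlinarith
    nlinarith
  calc (Fintype.card (BDTCode n k A × Finset (Fin k → A)) : ℝ) *
        (2 * Real.exp (-(γ ^ 2) * (N : ℝ) / 4)) =
      ((Fintype.card (BDTCode n k A × Finset (Fin k → A)) : ℝ) * 2) *
        Real.exp (-(γ ^ 2) * (N : ℝ) / 4) := by ring
    _ ≤ Real.exp ((2 ^ n * P : ℕ) * (a : ℝ) + ((a ^ k : ℕ) : ℝ) + 1) *
        Real.exp (-(γ ^ 2) * (N : ℝ) / 4) :=
          mul_le_mul_of_nonneg_right hprod (Real.exp_pos _).le
    _ = Real.exp (((2 ^ n * P : ℕ) * (a : ℝ) + ((a ^ k : ℕ) : ℝ) + 1) +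
          (-(γ ^ 2) * (N : ℝ) / 4)) := by rw [← Real.exp_add]
    _ < Real.exp 0 := by
        apply Real.exp_lt_exp.2
        nlinarith [hBlt]
    _ = 1 := Real.exp_zero


lemma pr_congr {α : Type*} [Fintype α] {P Q : α → Prop} (h : ∀ x, P x ↔ Q x) : pr P = pr Q :=
  congrArg pr (funext fun x => propext (h x))

lemma pr_eq_card {α : Type*} [Fintype α] (P : α → Prop) [DecidablePred P] :
    pr P = ((Finset.univ.filter P).card : ℝ) / (Fintype.card α : ℝ) := by
  unfold pr
  congr 2
  congr 1
  ext x
  simp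


lemma exists_good {D U : Type*} [Fintype D] [Fintype U] [Nonempty U] [Nonempty D]
    {I : Type*} [Fintype I] (Ev : I → Finset U) {γ : ℝ} (hγ0 : 0 < γ) (hγ1 : γ ≤ 1)
    (hbig : (Fintype.card I : ℝ) * (2 * Real.exp (-(γ ^ 2) * (Fintype.card D : ℝ) / 4)) < 1) :
    ∃ g : D → U, ∀ i : I,
      |pr (fun x : D => g x ∈ Ev i) - pr (fun y : U => y ∈ Ev i)| ≤ γ := by
  classical
  have hND : (0:ℝ) < (Fintype.card D : ℝ) := by exact_mod_cast Fintype.card_pos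
  have hNU : (0:ℝ) < (Fintype.card U : ℝ) := by exact_mod_cast Fintype.card_pos
  have key : ∀ (gg : D → U) (i : I),
      pr (fun x : D => gg x ∈ Ev i) - pr (fun y : U => y ∈ Ev i) =
      (((Finset.univ.filter (fun x : D => gg x ∈ Ev i)).card : ℝ) -
        ((Ev i).card : ℝ) / (Fintype.card U : ℝ) * (Fintype.card D : ℝ)) /
          (Fintype.card D : ℝ) := by
    intro gg i
    rw [pr_eq_card, pr_eq_card]
    have h1 : (Finset.univ.filter (fun y : U => y ∈ Ev i)) = Ev i := by
      ext y; simp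
    rw [h1]
    field_simp
  by_contra hcon
  push_neg at hcon
  have hcon' : ∀ g : D → U, ∃ i : I,
      γ * (Fintype.card D : ℝ) <
        |((Finset.univ.filter (fun x : D => g x ∈ Ev i)).card : ℝ) -
          ((Ev i).card : ℝ) / (Fintype.card U : ℝ) * (Fintype.card D : ℝ)| := by
    intro g
    obtain ⟨i, hi⟩ := hcon g
    refine ⟨i, ?_⟩
    rw [key g i, abs_div, abs_of_pos hND, lt_div_iff₀ hND] at hi
    linarith [hi]
  have hsub : (Finset.univ : Finset (D → U)) ⊆
      (Finset.univ : Finset I).biUnion (fun i => Finset.univ.filter (fun g : D → U =>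
        γ * (Fintype.card D : ℝ) <
          |((Finset.univ.filter (fun x => g x ∈ Ev i)).card : ℝ) -
            ((Ev i).card : ℝ) / (Fintype.card U : ℝ) * (Fintype.card D : ℝ)|)) := by
    intro g _
    obtain ⟨i, hi⟩ := hcon' g
    rw [Finset.mem_biUnion]
    exact ⟨i, Finset.mem_univ _, Finset.mem_filter.2 ⟨Finset.mem_univ _, hi⟩⟩
  have hcard : ((Fintype.card U : ℝ) ^ (Fintype.card D)) ≤
      (Fintype.card I : ℝ) * (2 * Real.exp (-(γ ^ 2) * (Fintype.card D : ℝ) / 4)) *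
        ((Fintype.card U : ℝ) ^ (Fintype.card D)) := by
    have h1 : (Fintype.card (D → U) : ℝ) ≤
        ∑ i : I, ((Finset.univ.filter (fun g : D → U =>
          γ * (Fintype.card D : ℝ) <
            |((Finset.univ.filter (fun x => g x ∈ Ev i)).card : ℝ) -
              ((Ev i).card : ℝ) / (Fintype.card U : ℝ) * (Fintype.card D : ℝ)|)).card : ℝ) := by
      have h0 := Finset.card_le_card hsub
      have h2 := le_trans h0 (Finset.card_biUnion_le)
      rw [Finset.card_univ] at h2
      exact_mod_cast h2
    have h3 : ∑ i : I, ((Finset.univ.filter (fun g : D → U =>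
          γ * (Fintype.card D : ℝ) <
            |((Finset.univ.filter (fun x => g x ∈ Ev i)).card : ℝ) -
              ((Ev i).card : ℝ) / (Fintype.card U : ℝ) * (Fintype.card D : ℝ)|)).card : ℝ) ≤
        ∑ _i : I, 2 * Real.exp (-(γ ^ 2) * (Fintype.card D : ℝ) / 4) *
          (Fintype.card U : ℝ) ^ (Fintype.card D) :=
      Finset.sum_le_sum (fun i _ => chernoff_two (Ev i) hγ0 hγ1)
    rw [Finset.sum_const, Finset.card_univ, nsmul_eq_mul] at h3
    have h4 : (Fintype.card (D → U) : ℝ) = (Fintype.card U : ℝ) ^ (Fintype.card D) := by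
      rw [Fintype.card_fun]; push_cast; rfl
    calc ((Fintype.card U : ℝ) ^ (Fintype.card D)) = (Fintype.card (D → U) : ℝ) := h4.symm
      _ ≤ _ := le_trans h1 h3
      _ = (Fintype.card I : ℝ) * (2 * Real.exp (-(γ ^ 2) * (Fintype.card D : ℝ) / 4)) *
        ((Fintype.card U : ℝ) ^ (Fintype.card D)) := by ring
  have hupos : (0:ℝ) < (Fintype.card U : ℝ) ^ (Fintype.card D) := by positivity
  nlinarith


lemma good_imp_prg {n k s : ℕ} (A : Type) [Fintype A] [Inhabited A] {γ : ℝ}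
    (g : (Fin s → Bool) → Fin k → (Fin n → Bool))
    (hgood : ∀ (c : BDTCode n k A) (W : Finset (Fin k → A)),
      |pr (fun x : Fin s → Bool =>
          g x ∈ Finset.univ.filter (fun X : Fin k → Fin n → Bool =>
            ∃ σ ∈ W, bdtOut c X = List.ofFn σ)) -
        pr (fun Y : Fin k → Fin n → Bool =>
          Y ∈ Finset.univ.filter (fun X : Fin k → Fin n → Bool =>
            ∃ σ ∈ W, bdtOut c X = List.ofFn σ))| ≤ γ) :
    IsBDTPRG n k s A γ g := by
  classical
  intro v
  set c := bdtCode n k v with hc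
  have hout : ∀ X : Fin k → (Fin n → Bool),
      treeOutList v (List.ofFn X) = bdtOut c X := fun X => treeOutList_eq_bdtOut v X
  set q : (Fin k → A) → ℝ :=
    fun σ => pr (fun x : Fin s → Bool => treeOutList v (List.ofFn (g x)) = List.ofFn σ) with hq
  set p : (Fin k → A) → ℝ :=
    fun σ => pr (fun X : Fin k → (Fin n → Bool) => treeOutList v (List.ofFn X) = List.ofFn σ)
      with hp
  have hdiff : ∀ W : Finset (Fin k → A), |∑ σ ∈ W, (q σ - p σ)| ≤ γ := by
    intro W
    have hQ : ∑ σ ∈ W, q σ =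
        pr (fun x : Fin s → Bool => ∃ σ ∈ W, treeOutList v (List.ofFn (g x)) = List.ofFn σ) :=
      (pr_mem_eq_sum (fun x : Fin s → Bool => treeOutList v (List.ofFn (g x))) W).symm
    have hP : ∑ σ ∈ W, p σ =
        pr (fun X : Fin k → (Fin n → Bool) =>
          ∃ σ ∈ W, treeOutList v (List.ofFn X) = List.ofFn σ) :=
      (pr_mem_eq_sum (fun X : Fin k → (Fin n → Bool) => treeOutList v (List.ofFn X)) W).symm
    rw [Finset.sum_sub_distrib, hQ, hP]
    have e1 : pr (fun x : Fin s → Bool =>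
        ∃ σ ∈ W, treeOutList v (List.ofFn (g x)) = List.ofFn σ) =
        pr (fun x : Fin s → Bool =>
          g x ∈ Finset.univ.filter (fun X : Fin k → Fin n → Bool =>
            ∃ σ ∈ W, bdtOut c X = List.ofFn σ)) :=
      pr_congr (fun x => by simp [hout])
    have e2 : pr (fun X : Fin k → (Fin n → Bool) =>
        ∃ σ ∈ W, treeOutList v (List.ofFn X) = List.ofFn σ) =
        pr (fun Y : Fin k → Fin n → Bool =>
          Y ∈ Finset.univ.filter (fun X : Fin k → Fin n → Bool =>
            ∃ σ ∈ W, bdtOut c X = List.ofFn σ)) :=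
      pr_congr (fun X => by simp [hout])
    rw [e1, e2]
    exact hgood c W
  have habs : ∀ σ ∈ Finset.univ.filter (fun σ : Fin k → A => p σ ≤ q σ),
      |q σ - p σ| = q σ - p σ := by
    intro σ hσ
    rw [Finset.mem_filter] at hσ
    exact abs_of_nonneg (sub_nonneg.2 hσ.2)
  have habs2 : ∀ σ ∈ Finset.univ.filter (fun σ : Fin k → A => ¬ p σ ≤ q σ),
      |q σ - p σ| = -(q σ - p σ) := by
    intro σ hσ
    rw [Finset.mem_filter] at hσ
    exact abs_of_neg (by linarith [lt_of_not_ge hσ.2])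
  have hsplit : ∑ σ : Fin k → A, |q σ - p σ| =
      (∑ σ ∈ Finset.univ.filter (fun σ : Fin k → A => p σ ≤ q σ), |q σ - p σ|) +
      (∑ σ ∈ Finset.univ.filter (fun σ : Fin k → A => ¬ p σ ≤ q σ), |q σ - p σ|) :=
    (Finset.sum_filter_add_sum_filter_not _ _ _).symm
  have h1 : (∑ σ ∈ Finset.univ.filter (fun σ : Fin k → A => p σ ≤ q σ), |q σ - p σ|) ≤ γ := by
    rw [Finset.sum_congr rfl habs]
    exact le_trans (le_abs_self _) (hdiff _)
  have h2 : (∑ σ ∈ Finset.univ.filter (fun σ : Fin k → A => ¬ p σ ≤ q σ), |q σ - p σ|) ≤ γ := by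
    rw [Finset.sum_congr rfl habs2, Finset.sum_neg_distrib]
    exact le_trans (neg_le_abs _) (hdiff _)
  rw [hsplit]
  linarith
lemma seed_big (n k : ℕ) (A : Type) [Fintype A] (ha : 2 ≤ Fintype.card A)
    {γ : ℝ} (hγ0 : 0 < γ) (hγ1 : γ ≤ 1) :
    128 * (2:ℝ) ^ n * (Fintype.card A : ℝ) ^ k / γ ^ 2 ≤
      ((2 ^ (n + 7 + ⌈(k : ℝ) * Real.logb 2 (Fintype.card A : ℝ) +
        2 * Real.logb 2 (1 / γ)⌉₊) : ℕ) : ℝ) := by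
  have ha0 : (0:ℝ) < (Fintype.card A : ℝ) := by
    have : 0 < Fintype.card A := by omega
    exact_mod_cast this
  have hγinv : (0:ℝ) < 1 / γ := by positivity
  set L := Real.logb 2 (Fintype.card A : ℝ) with hL
  set M := Real.logb 2 (1 / γ) with hM
  set x := (k : ℝ) * L + 2 * M with hx
  have hL0 : 0 ≤ L := Real.logb_nonneg (by norm_num) (by exact_mod_cast Nat.one_le_iff_ne_zero.2 (by omega))
  have hM0 : 0 ≤ M := Real.logb_nonneg (by norm_num) (by rw [le_div_iff₀ hγ0]; linarith)
  have hx0 : 0 ≤ x := by positivity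
  have h2x : (2:ℝ) ^ x = (Fintype.card A : ℝ) ^ k * (1 / γ) ^ 2 := by
    rw [hx, Real.rpow_add (by norm_num : (0:ℝ) < 2)]
    congr 1
    · rw [mul_comm ((k:ℝ)) L, Real.rpow_mul (by norm_num : (0:ℝ) ≤ 2), hL,
        Real.rpow_logb (by norm_num) (by norm_num) ha0, Real.rpow_natCast]
    · rw [mul_comm (2:ℝ) M, Real.rpow_mul (by norm_num : (0:ℝ) ≤ 2), hM,
        Real.rpow_logb (by norm_num) (by norm_num) hγinv]
      have h2 : ((2:ℕ):ℝ) = (2:ℝ) := by norm_num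
      rw [← h2, Real.rpow_natCast]
  have hceil : (2:ℝ) ^ x ≤ (2:ℝ) ^ ((⌈x⌉₊ : ℕ) : ℝ) :=
    Real.rpow_le_rpow_of_exponent_le (by norm_num) (Nat.le_ceil x)
  have hpow : ((2 ^ (n + 7 + ⌈x⌉₊) : ℕ) : ℝ) = (2:ℝ) ^ n * 128 * (2:ℝ) ^ (⌈x⌉₊ : ℕ) := by
    push_cast
    rw [pow_add, pow_add]
    norm_num
  rw [hpow]
  have h1 : (2:ℝ) ^ ((⌈x⌉₊ : ℕ)) = (2:ℝ) ^ ((⌈x⌉₊ : ℕ) : ℝ) := (Real.rpow_natCast 2 _).symm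
  rw [h1]
  have h2 : 128 * (2:ℝ) ^ n * (Fintype.card A : ℝ) ^ k / γ ^ 2 =
      (2:ℝ) ^ n * 128 * ((Fintype.card A : ℝ) ^ k * (1 / γ) ^ 2) := by
    field_simp
  rw [h2, ← h2x]
  apply mul_le_mul_of_nonneg_left (le_trans (le_of_eq rfl) hceil)
  positivity



/-- nonconstructive PRG for block decision trees: there is an absolute
constant `C > 0` such that for all positive `n, k`, every finite alphabet with at least
two symbols, and every `0 < γ ≤ 1`, there is a `γ`-PRG for `(k,n,Σ)` block decision
trees with seed length `s ≤ n + k·log₂|Σ| + 2·log₂(1/γ) + C`. -/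
theorem bdt_prg_nonconstructive :
    ∃ C : ℝ, 0 < C ∧
      ∀ n k : ℕ, 0 < n → 0 < k →
        ∀ (A : Type) [Fintype A], 2 ≤ Fintype.card A →
          ∀ γ : ℝ, 0 < γ → γ ≤ 1 →
            ∃ (s : ℕ) (Gen : (Fin s → Bool) → Fin k → (Fin n → Bool)),
              IsBDTPRG n k s A γ Gen ∧
              (s : ℝ) ≤ n + k * Real.logb 2 (Fintype.card A : ℝ) +
                2 * Real.logb 2 (1 / γ) + C := by
  classical
  refine ⟨8, by norm_num, ?_⟩
  intro n k hn hk A _ hA γ hγ0 hγ1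
  have hApos : 0 < Fintype.card A := by omega
  haveI : Inhabited A := ⟨(Fintype.card_pos_iff.1 hApos).some⟩
  set x := (k : ℝ) * Real.logb 2 (Fintype.card A : ℝ) + 2 * Real.logb 2 (1 / γ) with hx
  have hL0 : 0 ≤ Real.logb 2 (Fintype.card A : ℝ) :=
    Real.logb_nonneg (by norm_num) (by exact_mod_cast Nat.one_le_iff_ne_zero.2 (by omega))
  have hM0 : 0 ≤ Real.logb 2 (1 / γ) :=
    Real.logb_nonneg (by norm_num) (by rw [le_div_iff₀ hγ0]; linarith)
  have hx0 : 0 ≤ x := by positivity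
  set s := n + 7 + ⌈x⌉₊ with hs
  have hcardD : Fintype.card (Fin s → Bool) = 2 ^ s := by
    simp [Fintype.card_fun]
  have hN : 128 * (2:ℝ) ^ n * (Fintype.card A : ℝ) ^ k / γ ^ 2 ≤
      ((Fintype.card (Fin s → Bool) : ℕ) : ℝ) := by
    rw [hcardD]
    exact seed_big n k A hA hγ0 hγ1
  have hbig := hbig_lemma n k A hn hk hA hγ0 (N := Fintype.card (Fin s → Bool)) hN
  obtain ⟨g, hg⟩ := exists_good (D := Fin s → Bool) (U := Fin k → Fin n → Bool)
    (I := BDTCode n k A × Finset (Fin k → A))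
    (fun ci => Finset.univ.filter (fun X : Fin k → Fin n → Bool =>
      ∃ σ ∈ ci.2, bdtOut ci.1 X = List.ofFn σ)) hγ0 hγ1 hbig
  refine ⟨s, g, ?_, ?_⟩
  · apply good_imp_prg A g
    intro c W
    exact hg (c, W)
  · have hceil : (⌈x⌉₊ : ℝ) < x + 1 := Nat.ceil_lt_add_one hx0
    rw [hs]
    push_cast
    rw [hx] at hceil
    push_cast at hceil
    linarith
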